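/- Consider the MDP M with states S = {s₀, s₁, s₂, s₃, u}, initial state s₀, where Av(s₀) = {a, b} with Δ(s₀,a) = 0.8·δ_{s₁} + 0.2·δ_{s₂} and Δ(s₀,b) = 0.3·δ_{s₃} + 0.7·δ_u, where each of s₁, s₂, s₃ has a single available action looping to itself with probability 1, and where u has a single available action leading to s₁ with probability 1. Let C = {s₀, s₁, s₂, s₃} and R = {s₁}. Then P^max[Reach R] = P^max[Reach (R ∩ C) ∩ Stay C] = 0.8, while P^max[Reach (S \ C)] = 0.7. In particular, for every ε with 0 < ε ≤ 0.7 there exist an MDP M, a set C containing the initial state that is not an ε-core of M, and a set R ⊆ C such that the reachability value P^max[Reach R] is computed exactly by restricting to C, i.e., P^max[Reach R] = P^max[Reach (R ∩ C) ∩ Stay C]. -/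

import Mathlib

open MeasureTheory

/-- A Markov decision process: an initial state, a non-empty finite set of available
actions at each state, and for each state and action a distribution over successors. -/
structure MDP (S : Type*) (A : Type*) where
  init : S
  avail : S → Finset A
  avail_nonempty : ∀ s, (avail s).Nonempty
  trans : S → A → PMF S

/-- The space of infinite paths `s₀ a₀ s₁ a₁ ⋯`; coordinate `i` is the pair `(sᵢ, aᵢ)`. -/
def Traj (S : Type*) (A : Type*) := ℕ → S × A

instance {S A : Type*} : MeasurableSpace (Traj S A) :=
  @MeasurableSpace.pi ℕ (fun _ => S × A) (fun _ => ⊤)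

/-- A strategy: to each finite history `s₀ a₀ … s_{k-1} a_{k-1}` and current state `s_k` it
assigns a probability distribution over the actions available at `s_k`. -/
structure Strategy {S A : Type*} (M : MDP S A) where
  act : List (S × A) → S → PMF A
  mem_avail : ∀ h s a, a ∈ (act h s).support → a ∈ M.avail s

variable {S A : Type*}

/-- The probability, starting in state `s` after history `h`, that the path continues with
exactly the finite sequence `pre` of (state, action) pairs. -/
noncomputable def cylProb [DecidableEq S] (M : MDP S A) (σ : Strategy M) :
    List (S × A) → S → List (S × A) → ENNReal
  | _, _, [] => 1
  | h, s, (t, a) :: rest =>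
      (if t = s then (σ.act h s) a else 0) *
        ∑' s' : S, (M.trans s a) s' * cylProb M σ (h ++ [(t, a)]) s' rest

/-- The cylinder set of all infinite paths whose first coordinates agree with `pre`. -/
def Cyl (pre : List (S × A)) : Set (Traj S A) :=
  {ω | ∀ i : Fin pre.length, ω i = pre.get i}

/-- `P` is the family of path measures induced (via the Ionescu–Tulcea construction) by the
strategies and start states of `M`: each `P σ s` is a probability measure on infinite paths
whose value on every cylinder is the product of strategy- and transition-probabilities. -/
def IsPathMeasure [DecidableEq S] (M : MDP S A)
    (P : Strategy M → S → Measure (Traj S A)) : Prop :=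
  (∀ σ s, IsProbabilityMeasure (P σ s)) ∧
    ∀ σ s pre, P σ s (Cyl pre) = cylProb M σ [] s pre

/-- `P^max_s[E]`, the supremum over all strategies of the probability of `E`. -/
noncomputable def pmax (M : MDP S A) (P : Strategy M → S → Measure (Traj S A))
    (s : S) (E : Set (Traj S A)) : ENNReal :=
  ⨆ σ : Strategy M, P σ s E

/-- `P^min_s[E]`, the infimum over all strategies of the probability of `E`. -/
noncomputable def pmin (M : MDP S A) (P : Strategy M → S → Measure (Traj S A))
    (s : S) (E : Set (Traj S A)) : ENNReal :=
  ⨅ σ : Strategy M, P σ s E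

/-- The set of paths that visit `R` at some point. -/
def Reach (R : Set S) : Set (Traj S A) := {ω | ∃ i, (ω i).1 ∈ R}

/-- The set of paths that stay in `C` forever. -/
def Stay (C : Set S) : Set (Traj S A) := {ω | ∀ i, (ω i).1 ∈ C}

/-- The set of paths that visit `R` within the first `n` steps. -/
def ReachN (n : ℕ) (R : Set S) : Set (Traj S A) := {ω | ∃ i ≤ n, (ω i).1 ∈ R}

/-- The set of paths that stay in `C` for the first `n` steps. -/
def StayN (n : ℕ) (C : Set S) : Set (Traj S A) := {ω | ∀ i ≤ n, (ω i).1 ∈ C}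

/-- `C` is an `ε`-core: the maximal probability of ever leaving `C` is `< ε`. -/
def IsCore [DecidableEq S] (M : MDP S A) (P : Strategy M → S → Measure (Traj S A))
    (ε : ℝ) (C : Set S) : Prop :=
  pmax M P M.init (Reach Cᶜ) < ENNReal.ofReal ε

/-- `C` is an `n`-step `ε`-core: the maximal probability of leaving `C` within `n` steps
is `< ε`. -/
def IsNCore [DecidableEq S] (M : MDP S A) (P : Strategy M → S → Measure (Traj S A))
    (n : ℕ) (ε : ℝ) (C : Set S) : Prop :=
  pmax M P M.init (ReachN n Cᶜ) < ENNReal.ofReal ε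

/-- The five states of the counterexample MDP. -/
inductive St where
  | s0 | s1 | s2 | s3 | u
  deriving DecidableEq

instance : Fintype St :=
  ⟨{St.s0, St.s1, St.s2, St.s3, St.u}, by intro x; cases x <;> simp⟩

/-- The actions of the counterexample MDP. -/
inductive Ac where
  | a | b | loop
  deriving DecidableEq

instance : Fintype Ac :=
  ⟨{Ac.a, Ac.b, Ac.loop}, by intro x; cases x <;> simp⟩

/-- The counterexample MDP: `Av(s₀) = {a, b}`, `Δ(s₀,a) = 0.8·δ_{s₁} + 0.2·δ_{s₂}`,
`Δ(s₀,b) = 0.3·δ_{s₃} + 0.7·δ_u`; `s₁`, `s₂`, `s₃` loop to themselves with probability `1`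
and `u` leads to `s₁` with probability `1`. -/
noncomputable def exM : MDP St Ac where
  init := St.s0
  avail := fun s =>
    match s with
    | St.s0 => {Ac.a, Ac.b}
    | _ => {Ac.loop}
  avail_nonempty := by intro s; cases s <;> simp
  trans := fun s act =>
    match s, act with
    | St.s0, Ac.a => PMF.ofMultiset {St.s1, St.s1, St.s1, St.s1, St.s2} (by decide)
    | St.s0, Ac.b =>
        PMF.ofMultiset
          {St.s3, St.s3, St.s3, St.u, St.u, St.u, St.u, St.u, St.u, St.u} (by decide)
    | St.u, _ => PMF.pure St.s1
    | s, _ => PMF.pure s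



section Machinery
variable {S A : Type*} [Fintype S] [DecidableEq S]
variable (M : MDP S A) (σ : Strategy M)

lemma cylProb_nil (h : List (S × A)) (s : S) : cylProb M σ h s [] = 1 := rfl

lemma cylProb_cons (h : List (S × A)) (s t : S) (c : A) (rest : List (S × A)) :
    cylProb M σ h s ((t, c) :: rest) =
      (if t = s then (σ.act h s) c else 0) *
        ∑' s' : S, (M.trans s c) s' * cylProb M σ (h ++ [(t, c)]) s' rest := rfl

lemma cylProb_single (h : List (S × A)) (s t : S) (c : A) :
    cylProb M σ h s [(t, c)] = if t = s then (σ.act h s) c else 0 := by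
  rw [cylProb_cons]
  have : ∑' s' : S, (M.trans s c) s' * cylProb M σ (h ++ [(t, c)]) s' [] = 1 := by
    simp only [cylProb_nil, mul_one]; exact (M.trans s c).tsum_coe
  rw [this, mul_one]

lemma cylProb_pair (s t0 t1 : S) (c0 c1 : A) :
    cylProb M σ [] s [(t0, c0), (t1, c1)] =
      if t0 = s then (σ.act [] s) c0 * ((M.trans s c0) t1 * (σ.act [(t0, c0)] t1) c1)
      else 0 := by
  rw [cylProb_cons]
  have h1 : ∀ s' : S, cylProb M σ [(t0, c0)] s' [(t1, c1)] =
      if t1 = s' then (σ.act [(t0, c0)] s') c1 else 0 := fun s' => by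
    simpa using cylProb_single M σ [(t0, c0)] s' t1 c1
  have h2 : ∑' s' : S, (M.trans s c0) s' * cylProb M σ [(t0, c0)] s' [(t1, c1)]
      = (M.trans s c0) t1 * (σ.act [(t0, c0)] t1) c1 := by
    rw [tsum_eq_single t1]
    · rw [h1]; simp
    · intro b hb; rw [h1]
      rw [if_neg (fun h : t1 = b => hb h.symm), mul_zero]
  simp only [List.nil_append]
  rw [h2]
  split <;> simp [mul_assoc]


/-- If the cylinder probability is nonzero, the prefix is "consistent". -/
lemma cylProb_consistent :
    ∀ (pre : List (S × A)) (h : List (S × A)) (s : S),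
      cylProb M σ h s pre ≠ 0 →
      (∀ hd, pre.head? = some hd → hd.1 = s) ∧
      ∀ j (hj1 : j + 1 < pre.length),
        (pre.get ⟨j, by omega⟩).2 ∈ M.avail (pre.get ⟨j, by omega⟩).1 ∧
        M.trans (pre.get ⟨j, by omega⟩).1 (pre.get ⟨j, by omega⟩).2
          (pre.get ⟨j + 1, hj1⟩).1 ≠ 0 := by
  intro pre
  induction pre with
  | nil => intro h s _; exact ⟨by simp, fun j hj => by simp at hj⟩
  | cons x rest ih =>
    intro h s hne
    obtain ⟨t, c⟩ := x
    rw [cylProb_cons] at hne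
    have hts : t = s := by
      by_contra hts; rw [if_neg hts] at hne; simp at hne
    rw [if_pos hts] at hne
    have hσ : (σ.act h s) c ≠ 0 := fun h0 => hne (by rw [h0, zero_mul])
    have hsum : ∑' s' : S, (M.trans s c) s' * cylProb M σ (h ++ [(t, c)]) s' rest ≠ 0 :=
      fun h0 => hne (by rw [h0, mul_zero])
    obtain ⟨s', hs'⟩ : ∃ s', (M.trans s c) s' * cylProb M σ (h ++ [(t, c)]) s' rest ≠ 0 := by
      by_contra hc
      push_neg at hc
      exact hsum (by simp [hc])
    have htr : (M.trans s c) s' ≠ 0 := fun h0 => hs' (by rw [h0, zero_mul])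
    have hrest : cylProb M σ (h ++ [(t, c)]) s' rest ≠ 0 :=
      fun h0 => hs' (by rw [h0, mul_zero])
    have ihr := ih (h ++ [(t, c)]) s' hrest
    have hcav : c ∈ M.avail s := σ.mem_avail h s c (by
      rw [PMF.mem_support_iff]; exact hσ)
    refine ⟨by simp [hts], ?_⟩
    intro j hj1
    match j with
    | 0 =>
      match rest, hj1 with
      | (t', c') :: rest', _ =>
        have ht' : t' = s' := ihr.1 (t', c') rfl
        simp only [List.get_cons_zero, List.get_cons_succ]
        subst hts; subst ht'
        exact ⟨hcav, htr⟩
    | j + 1 =>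
      have hj1' : j + 1 < rest.length := by simpa using hj1
      have := ihr.2 j hj1'
      simpa using this

/-- Along a "σ-closed" set of states, nonzero cylinders keep all states inside. -/
lemma cylProb_closed (K : Set S)
    (hK : ∀ h s, s ∈ K → ∀ c, (σ.act h s) c ≠ 0 → ∀ s', (M.trans s c) s' ≠ 0 → s' ∈ K) :
    ∀ (pre : List (S × A)) (h : List (S × A)) (s : S), s ∈ K →
      cylProb M σ h s pre ≠ 0 → ∀ x ∈ pre, x.1 ∈ K := by
  intro pre
  induction pre with
  | nil => intro _ _ _ _ x hx; simp at hx
  | cons x rest ih =>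
    intro h s hsK hne y hy
    obtain ⟨t, c⟩ := x
    rw [cylProb_cons] at hne
    have hts : t = s := by
      by_contra hts; rw [if_neg hts] at hne; simp at hne
    rw [if_pos hts] at hne
    have hσ : (σ.act h s) c ≠ 0 := fun h0 => hne (by rw [h0, zero_mul])
    obtain ⟨s', hs'⟩ : ∃ s', (M.trans s c) s' * cylProb M σ (h ++ [(t, c)]) s' rest ≠ 0 := by
      by_contra hc
      push_neg at hc
      exact hne (by simp [hc])
    have htr : (M.trans s c) s' ≠ 0 := fun h0 => hs' (by rw [h0, zero_mul])
    have hrest : cylProb M σ (h ++ [(t, c)]) s' rest ≠ 0 :=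
      fun h0 => hs' (by rw [h0, mul_zero])
    have hs'K : s' ∈ K := hK h s hsK c hσ s' htr
    rcases List.mem_cons.mp hy with rfl | hy'
    · simpa [hts] using hsK
    · exact ih (h ++ [(t, c)]) s' hs'K hrest y hy'

/-- Covering an event determined by the first `n` coordinates by cylinders. -/
lemma measure_le_sum_prefix (μ : Measure (Traj S A)) {s : S}
    (hμ : ∀ pre, μ (Cyl pre) = cylProb M σ [] s pre)
    {n : ℕ} (Q : (Fin n → S × A) → Prop) [DecidablePred Q] [Fintype A]
    (E : Set (Traj S A)) (hE : ∀ ω ∈ E, Q (fun i => ω i)) :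
    μ E ≤ ∑ v ∈ Finset.univ.filter Q, cylProb M σ [] s (List.ofFn v) := by
  have hsub : E ⊆ ⋃ v ∈ Finset.univ.filter Q, Cyl (List.ofFn v) := by
    intro ω hω
    refine Set.mem_biUnion (Finset.mem_filter.mpr ⟨Finset.mem_univ _, hE ω hω⟩) ?_
    intro i
    simp [List.get_ofFn]
  calc μ E ≤ μ (⋃ v ∈ Finset.univ.filter Q, Cyl (List.ofFn v)) := measure_mono hsub
    _ ≤ ∑ v ∈ Finset.univ.filter Q, μ (Cyl (List.ofFn v)) := measure_biUnion_finset_le _ _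
    _ = ∑ v ∈ Finset.univ.filter Q, cylProb M σ [] s (List.ofFn v) := by
        simp only [hμ]


lemma measure_pair_le (μ : Measure (Traj S A)) {s : S}
    (hμ : ∀ pre, μ (Cyl pre) = cylProb M σ [] s pre)
    (Q : S × A → S × A → Prop) [∀ x y, Decidable (Q x y)] [Fintype A]
    (E : Set (Traj S A)) (hE : ∀ ω ∈ E, Q (ω 0) (ω 1)) :
    μ E ≤ ∑ x : S × A, ∑ y : S × A, if Q x y then cylProb M σ [] s [x, y] else 0 := by
  have hsub : E ⊆ ⋃ p ∈ Finset.univ.filter (fun p : (S × A) × (S × A) => Q p.1 p.2),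
      Cyl [p.1, p.2] := by
    intro ω hω
    have hm : ω ∈ Cyl [ω 0, ω 1] := by
      intro i; fin_cases i <;> rfl
    exact Set.mem_biUnion (Finset.mem_filter.mpr ⟨Finset.mem_univ ((ω 0, ω 1) : (S × A) × (S × A)), hE ω hω⟩) hm
  calc μ E ≤ μ (⋃ p ∈ Finset.univ.filter (fun p : (S × A) × (S × A) => Q p.1 p.2),
        Cyl [p.1, p.2]) := measure_mono hsub
    _ ≤ ∑ p ∈ Finset.univ.filter (fun p : (S × A) × (S × A) => Q p.1 p.2),
        μ (Cyl [p.1, p.2]) := measure_biUnion_finset_le _ _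
    _ = ∑ p ∈ Finset.univ.filter (fun p : (S × A) × (S × A) => Q p.1 p.2),
        cylProb M σ [] s [p.1, p.2] := by simp only [hμ]
    _ = ∑ p : (S × A) × (S × A), if Q p.1 p.2 then cylProb M σ [] s [p.1, p.2] else 0 :=
        (Finset.sum_filter _ _)
    _ = ∑ x : S × A, ∑ y : S × A, if Q x y then cylProb M σ [] s [x, y] else 0 :=
        Fintype.sum_prod_type _

end Machinery

section Helpers

lemma sum_St (f : St → ENNReal) : ∑ x : St, f x = f .s0 + f .s1 + f .s2 + f .s3 + f .u := by
  have : (Finset.univ : Finset St) = {St.s0, St.s1, St.s2, St.s3, St.u} := by decide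
  rw [this]
  rw [Finset.sum_insert (by decide), Finset.sum_insert (by decide),
    Finset.sum_insert (by decide), Finset.sum_insert (by decide), Finset.sum_singleton]
  ring

lemma sum_Ac (f : Ac → ENNReal) : ∑ x : Ac, f x = f .a + f .b + f .loop := by
  have : (Finset.univ : Finset Ac) = {Ac.a, Ac.b, Ac.loop} := by decide
  rw [this]
  rw [Finset.sum_insert (by decide), Finset.sum_insert (by decide), Finset.sum_singleton]
  ring

lemma pmf_sum_Ac (p : PMF Ac) : p .a + p .b + p .loop = 1 := by
  have := p.tsum_coe
  rw [tsum_fintype, sum_Ac] at this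
  exact this

lemma sum_prod_StAc (f : St × Ac → ENNReal) :
    ∑ x : St × Ac, f x = ∑ t : St, ∑ c : Ac, f (t, c) := Fintype.sum_prod_type _

end Helpers

section ExFacts

lemma trans_s0_a_s1 : exM.trans St.s0 Ac.a St.s1 = 4 / 5 := by
  rw [show exM.trans St.s0 Ac.a = PMF.ofMultiset {St.s1, St.s1, St.s1, St.s1, St.s2} (by decide) from rfl, PMF.ofMultiset_apply]
  simp [Multiset.insert_eq_cons]

lemma trans_s0_b_u : exM.trans St.s0 Ac.b St.u = 7 / 10 := by
  rw [show exM.trans St.s0 Ac.b = PMF.ofMultiset {St.s3, St.s3, St.s3, St.u, St.u, St.u, St.u, St.u, St.u, St.u} (by decide) from rfl, PMF.ofMultiset_apply]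
  simp [Multiset.insert_eq_cons]

lemma trans_s0_a_u : exM.trans St.s0 Ac.a St.u = 0 := by
  rw [show exM.trans St.s0 Ac.a = PMF.ofMultiset {St.s1, St.s1, St.s1, St.s1, St.s2} (by decide) from rfl, PMF.ofMultiset_apply]
  simp [Multiset.insert_eq_cons]

lemma trans_s0_b_s1 : exM.trans St.s0 Ac.b St.s1 = 0 := by
  rw [show exM.trans St.s0 Ac.b = PMF.ofMultiset {St.s3, St.s3, St.s3, St.u, St.u, St.u, St.u, St.u, St.u, St.u} (by decide) from rfl, PMF.ofMultiset_apply]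
  simp [Multiset.insert_eq_cons]

lemma trans_s0_loop (s' : St) : exM.trans St.s0 Ac.loop s' = (PMF.pure St.s0) s' := rfl

-- support of trans from s0
lemma trans_s0_a_supp (s' : St) (h : exM.trans St.s0 Ac.a s' ≠ 0) :
    s' = St.s1 ∨ s' = St.s2 := by
  cases s' <;> first
    | exact Or.inl rfl
    | exact Or.inr rfl
    | (exact absurd (by
        rw [show exM.trans St.s0 Ac.a = PMF.ofMultiset {St.s1, St.s1, St.s1, St.s1, St.s2} (by decide) from rfl, PMF.ofMultiset_apply]
        simp [Multiset.insert_eq_cons]) h)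

lemma trans_s0_b_supp (s' : St) (h : exM.trans St.s0 Ac.b s' ≠ 0) :
    s' = St.s3 ∨ s' = St.u := by
  cases s' <;> first
    | exact Or.inl rfl
    | exact Or.inr rfl
    | (exact absurd (by
        rw [show exM.trans St.s0 Ac.b = PMF.ofMultiset {St.s3, St.s3, St.s3, St.u, St.u, St.u, St.u, St.u, St.u, St.u} (by decide) from rfl, PMF.ofMultiset_apply]
        simp [Multiset.insert_eq_cons]) h)

lemma trans_s1 (c : Ac) : exM.trans St.s1 c = PMF.pure St.s1 := rfl
lemma trans_s2 (c : Ac) : exM.trans St.s2 c = PMF.pure St.s2 := rfl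
lemma trans_s3 (c : Ac) : exM.trans St.s3 c = PMF.pure St.s3 := rfl
lemma trans_u (c : Ac) : exM.trans St.u c = PMF.pure St.s1 := rfl

lemma avail_s0 : exM.avail St.s0 = {Ac.a, Ac.b} := rfl
lemma avail_s1 : exM.avail St.s1 = {Ac.loop} := rfl
lemma avail_s2 : exM.avail St.s2 = {Ac.loop} := rfl
lemma avail_s3 : exM.avail St.s3 = {Ac.loop} := rfl
lemma avail_u : exM.avail St.u = {Ac.loop} := rfl

/-- A memoryless deterministic strategy. -/
noncomputable def stratOf (f : St → Ac) (hf : ∀ s, f s ∈ exM.avail s) : Strategy exM where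
  act := fun _ s => PMF.pure (f s)
  mem_avail := by
    intro h s a ha
    rw [PMF.support_pure] at ha
    simp at ha
    subst ha
    exact hf s

noncomputable def sigA : Strategy exM :=
  stratOf (fun s => match s with | St.s0 => Ac.a | _ => Ac.loop) (by intro s; cases s <;> decide)

noncomputable def sigB : Strategy exM :=
  stratOf (fun s => match s with | St.s0 => Ac.b | _ => Ac.loop) (by intro s; cases s <;> decide)

lemma sigA_act (h : List (St × Ac)) (s : St) :
    sigA.act h s = PMF.pure (match s with | St.s0 => Ac.a | _ => Ac.loop) := rfl

lemma sigB_act (h : List (St × Ac)) (s : St) :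
    sigB.act h s = PMF.pure (match s with | St.s0 => Ac.b | _ => Ac.loop) := rfl

end ExFacts

section PairSum
variable {S A : Type*} [Fintype S] [Fintype A] [DecidableEq S]

lemma pair_sum (M : MDP S A) (σ : Strategy M) (s : S) (T : S → Prop) [DecidablePred T] :
    ∑ x : S × A, ∑ y : S × A, (if T y.1 then cylProb M σ [] s [x, y] else 0)
      = ∑ c0 : A, (σ.act [] s) c0 * ∑ t1 : S, (if T t1 then (M.trans s c0) t1 else 0) := by
  have h1 : ∀ (t0 : S) (c0 : A),
      ∑ y : S × A, (if T y.1 then cylProb M σ [] s [(t0, c0), y] else 0)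
      = if t0 = s then (σ.act [] s) c0 * ∑ t1 : S, (if T t1 then (M.trans s c0) t1 else 0)
        else 0 := by
    intro t0 c0
    rw [Fintype.sum_prod_type]
    have h2 : ∀ t1 : S, ∑ c1 : A, (if T t1 then cylProb M σ [] s [(t0, c0), (t1, c1)] else 0)
        = if t0 = s then (if T t1 then (σ.act [] s) c0 * ((M.trans s c0) t1) else 0)
          else 0 := by
      intro t1
      by_cases hT : T t1
      · simp only [if_pos hT, cylProb_pair]
        by_cases hts : t0 = s
        · simp only [if_pos hts]
          have hre : ∀ c1 : A, (σ.act [] s) c0 * ((M.trans s c0) t1 * (σ.act [(t0, c0)] t1) c1)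
              = ((σ.act [] s) c0 * (M.trans s c0) t1) * (σ.act [(t0, c0)] t1) c1 := by
            intro c1; ring
          rw [Finset.sum_congr rfl (fun c1 _ => hre c1), ← Finset.mul_sum]
          have hsum : ∑ c1 : A, (σ.act [(t0, c0)] t1) c1 = 1 := by
            have := (σ.act [(t0, c0)] t1).tsum_coe; rwa [tsum_fintype] at this
          rw [hsum, mul_one]
        · simp [hts]
      · simp [hT]
    rw [Finset.sum_congr rfl (fun t1 _ => h2 t1)]
    by_cases hts : t0 = s
    · simp only [if_pos hts]
      rw [Finset.mul_sum]
      exact Finset.sum_congr rfl (fun t1 _ => by rw [mul_ite, mul_zero])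
    · simp [hts]
  rw [Fintype.sum_prod_type, Finset.sum_congr rfl
    (fun t0 _ => Finset.sum_congr rfl (fun c0 _ => h1 t0 c0)), Finset.sum_comm]
  refine Finset.sum_congr rfl (fun c0 _ => ?_)
  rw [Finset.sum_ite_eq' Finset.univ s]
  simp

end PairSum

section Bounds

lemma get_ofFn' {α : Type*} {m : ℕ} (v : Fin m → α) (j : ℕ) (h : j < (List.ofFn v).length) :
    (List.ofFn v).get ⟨j, h⟩ = v ⟨j, by simpa using h⟩ := by
  rw [List.get_ofFn]
  congr 1

lemma pure_ne_zero {α : Type*} {x y : α} (h : (PMF.pure x) y ≠ 0) : y = x := by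
  by_contra hne
  rw [PMF.pure_apply, if_neg hne] at h
  exact h rfl

variable (P : Strategy exM → St → Measure (Traj St Ac)) (hP : IsPathMeasure exM P)

include hP in
lemma meas_root (σ : Strategy exM) :
    P σ St.s0 {ω : Traj St Ac | (ω 0).1 ≠ St.s0} = 0 := by
  classical
  refine le_antisymm ?_ zero_le
  have hb := measure_le_sum_prefix exM σ (P σ St.s0) (hP.2 σ St.s0)
    (n := 1) (fun v => (v 0).1 ≠ St.s0) _ (fun ω hω => hω)
  refine le_trans hb (le_of_eq (Finset.sum_eq_zero ?_))
  intro v hv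
  rw [Finset.mem_filter] at hv
  by_contra hne
  have hhead := (cylProb_consistent exM σ _ [] St.s0 hne).1 (v 0) (by
    rw [show List.ofFn v = [v 0] from by simp [List.ofFn_succ]]; rfl)
  exact hv.2 hhead

include hP in
lemma meas_bad (σ : Strategy exM) (n : ℕ) :
    P σ St.s0 {ω : Traj St Ac |
      ¬ ((ω n).2 ∈ exM.avail (ω n).1 ∧
          exM.trans (ω n).1 (ω n).2 (ω (n + 1)).1 ≠ 0)} = 0 := by
  classical
  refine le_antisymm ?_ zero_le
  have hb := measure_le_sum_prefix exM σ (P σ St.s0) (hP.2 σ St.s0)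
    (n := n + 2) (fun v : Fin (n + 2) → St × Ac =>
      ¬ ((v ⟨n, by omega⟩).2 ∈ exM.avail (v ⟨n, by omega⟩).1 ∧
          exM.trans (v ⟨n, by omega⟩).1 (v ⟨n, by omega⟩).2 (v ⟨n + 1, by omega⟩).1 ≠ 0))
    _ (fun ω hω => hω)
  refine le_trans hb (le_of_eq (Finset.sum_eq_zero ?_))
  intro v hv
  rw [Finset.mem_filter] at hv
  by_contra hne
  have hcons := (cylProb_consistent exM σ _ [] St.s0 hne).2 n (by simp)
  rw [get_ofFn' v n, get_ofFn' v (n + 1)] at hcons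
  exact hv.2 hcons

include hP in
/-- The states reachable under the always-`a` strategy. -/
lemma meas_leaveC_sigA (n : ℕ) :
    P sigA St.s0 {ω : Traj St Ac | (ω n).1 = St.u} = 0 := by
  classical
  refine le_antisymm ?_ zero_le
  have hb := measure_le_sum_prefix exM sigA (P sigA St.s0) (hP.2 sigA St.s0)
    (n := n + 1) (fun v : Fin (n + 1) → St × Ac => (v ⟨n, by omega⟩).1 = St.u)
    _ (fun ω hω => hω)
  refine le_trans hb (le_of_eq (Finset.sum_eq_zero ?_))
  intro v hv
  rw [Finset.mem_filter] at hv
  by_contra hne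
  have hK : ∀ h s, s ∈ ({St.s0, St.s1, St.s2} : Set St) → ∀ c, (sigA.act h s) c ≠ 0 →
      ∀ s', (exM.trans s c) s' ≠ 0 → s' ∈ ({St.s0, St.s1, St.s2} : Set St) := by
    intro h s hs c hc s' htr
    rcases hs with rfl | rfl | rfl
    · have hc' : c = Ac.a := pure_ne_zero (x := Ac.a) (by
        rw [sigA_act] at hc; exact hc)
      rw [hc'] at htr
      rcases trans_s0_a_supp s' htr with rfl | rfl <;> simp
    · have := pure_ne_zero (x := St.s1) (by rw [trans_s1] at htr; exact htr)
      rw [this]; simp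
    · have := pure_ne_zero (x := St.s2) (by rw [trans_s2] at htr; exact htr)
      rw [this]; simp
  have hall := cylProb_closed exM sigA _ hK (List.ofFn v) [] St.s0 (by simp) hne
  have hmem : v ⟨n, by omega⟩ ∈ List.ofFn v := by
    rw [List.mem_ofFn]; exact ⟨_, rfl⟩
  have := hall _ hmem
  rw [hv.2] at this
  simp at this

/-- A consistent path starting at `s₀` either moves to `u` at step 1, or is eventually
constant equal to its step-1 state, which lies in `{s₁, s₂, s₃}`. -/
lemma consist_cases (ω : Traj St Ac)
    (h0 : (ω 0).1 = St.s0)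
    (hc : ∀ n, (ω n).2 ∈ exM.avail (ω n).1 ∧
        exM.trans (ω n).1 (ω n).2 (ω (n + 1)).1 ≠ 0) :
    (ω 1).1 = St.u ∨
      ((∀ n, (ω (n + 1)).1 = (ω 1).1) ∧
        ((ω 1).1 = St.s1 ∨ (ω 1).1 = St.s2 ∨ (ω 1).1 = St.s3)) := by
  have h01 := hc 0
  rw [h0] at h01
  have hstep : ∀ m, ((ω m).1 = St.s1 ∨ (ω m).1 = St.s2 ∨ (ω m).1 = St.s3) →
      (ω (m + 1)).1 = (ω m).1 := by
    intro m hm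
    have hcm := (hc m).2
    rcases hm with h | h | h <;> rw [h] at hcm ⊢
    · rw [trans_s1] at hcm; exact pure_ne_zero hcm
    · rw [trans_s2] at hcm; exact pure_ne_zero hcm
    · rw [trans_s3] at hcm; exact pure_ne_zero hcm
  have hmain : ((ω 1).1 = St.s1 ∨ (ω 1).1 = St.s2 ∨ (ω 1).1 = St.s3) →
      ∀ n, (ω (n + 1)).1 = (ω 1).1 := by
    intro hcase n
    induction n with
    | zero => rfl
    | succ m ihm =>
      have : (ω (m + 1)).1 = St.s1 ∨ (ω (m + 1)).1 = St.s2 ∨ (ω (m + 1)).1 = St.s3 := by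
        rw [ihm]; exact hcase
      rw [hstep (m + 1) this, ihm]
  have hact : (ω 0).2 = Ac.a ∨ (ω 0).2 = Ac.b := by
    have hm := h01.1
    rw [avail_s0] at hm
    cases hA : (ω 0).2 <;> rw [hA] at hm <;> simp at hm <;> simp
  rcases hact with hA | hA
  · have htr := h01.2
    rw [hA] at htr
    rcases trans_s0_a_supp _ htr with h | h
    · exact Or.inr ⟨hmain (Or.inl h), Or.inl h⟩
    · exact Or.inr ⟨hmain (Or.inr (Or.inl h)), Or.inr (Or.inl h)⟩
  · have htr := h01.2
    rw [hA] at htr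
    rcases trans_s0_b_supp _ htr with h | h
    · exact Or.inr ⟨hmain (Or.inr (Or.inr h)), Or.inr (Or.inr h)⟩
    · exact Or.inl h

end Bounds

section Bounds2

lemma ennreal_7_10_le_4_5 : (7:ENNReal)/10 ≤ 4/5 := by
  have h : (4:ENNReal)/5 = 8/10 := by
    rw [show (8:ENNReal) = 4*2 by norm_num, show (10:ENNReal) = 5*2 by norm_num,
      ENNReal.mul_div_mul_right _ _ (by norm_num) (by norm_num)]
  rw [h]
  exact ENNReal.div_le_div_right (by norm_num) _

lemma trans_s0_loop_apply (s' : St) (h : s' ≠ St.s0) : exM.trans St.s0 Ac.loop s' = 0 := by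
  rw [trans_s0_loop, PMF.pure_apply, if_neg h]

lemma sigma_loop_zero (σ : Strategy exM) (h : List (St × Ac)) :
    (σ.act h St.s0) Ac.loop = 0 := by
  by_contra hne
  have := σ.mem_avail h St.s0 Ac.loop ((PMF.mem_support_iff _ _).mpr hne)
  rw [avail_s0] at this
  simp at this

variable (P : Strategy exM → St → Measure (Traj St Ac)) (hP : IsPathMeasure exM P)

include hP

lemma measure_secondcoord_le (σ : Strategy exM) (T : St → Prop) [DecidablePred T]
    (E : Set (Traj St Ac)) (hE : ∀ ω ∈ E, T ((ω 1).1)) :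
    P σ St.s0 E ≤ ∑ c0 : Ac, (σ.act [] St.s0) c0 *
      ∑ t1 : St, (if T t1 then (exM.trans St.s0 c0) t1 else 0) := by
  refine le_trans
    (measure_pair_le exM σ (P σ St.s0) (hP.2 σ St.s0) (fun _ y => T y.1) E hE) ?_
  exact le_of_eq (pair_sum exM σ St.s0 T)

lemma meas_E2_le (σ : Strategy exM) :
    P σ St.s0 {ω : Traj St Ac | (ω 1).1 = St.s1 ∨ (ω 1).1 = St.u} ≤ 4/5 := by
  classical
  refine le_trans (measure_secondcoord_le P hP σ (fun t => t = St.s1 ∨ t = St.u)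
    _ (fun ω hω => hω)) ?_
  have hin : ∀ c0 : Ac, ∑ t1 : St,
      (if t1 = St.s1 ∨ t1 = St.u then (exM.trans St.s0 c0) t1 else 0)
      = exM.trans St.s0 c0 St.s1 + exM.trans St.s0 c0 St.u := by
    intro c0
    rw [sum_St]
    simp
  rw [Finset.sum_congr rfl (fun c0 _ => by rw [hin c0]), sum_Ac, trans_s0_a_s1, trans_s0_a_u,
    trans_s0_b_s1, trans_s0_b_u, trans_s0_loop_apply St.s1 (by simp),
    trans_s0_loop_apply St.u (by simp), sigma_loop_zero σ]
  simp only [add_zero, zero_add, zero_mul, mul_zero]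
  have hsum : (σ.act [] St.s0) Ac.a + (σ.act [] St.s0) Ac.b = 1 := by
    have := pmf_sum_Ac (σ.act [] St.s0)
    rw [sigma_loop_zero σ, add_zero] at this
    exact this
  calc (σ.act [] St.s0) Ac.a * (4/5) + (σ.act [] St.s0) Ac.b * (7/10)
      ≤ (σ.act [] St.s0) Ac.a * (4/5) + (σ.act [] St.s0) Ac.b * (4/5) :=
        add_le_add le_rfl (mul_le_mul_right ennreal_7_10_le_4_5 _)
    _ = ((σ.act [] St.s0) Ac.a + (σ.act [] St.s0) Ac.b) * (4/5) := (add_mul _ _ _).symm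
    _ = 4/5 := by rw [hsum, one_mul]

lemma meas_E3_le (σ : Strategy exM) :
    P σ St.s0 {ω : Traj St Ac | (ω 1).1 = St.u} ≤ 7/10 := by
  classical
  refine le_trans (measure_secondcoord_le P hP σ (fun t => t = St.u)
    _ (fun ω hω => hω)) ?_
  have hin : ∀ c0 : Ac, ∑ t1 : St,
      (if t1 = St.u then (exM.trans St.s0 c0) t1 else 0) = exM.trans St.s0 c0 St.u := by
    intro c0
    rw [sum_St]
    simp
  rw [Finset.sum_congr rfl (fun c0 _ => by rw [hin c0]), sum_Ac, trans_s0_a_u, trans_s0_b_u,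
    trans_s0_loop_apply St.u (by simp), sigma_loop_zero σ]
  simp only [add_zero, zero_add, zero_mul, mul_zero]
  calc (σ.act [] St.s0) Ac.b * (7/10) ≤ 1 * (7/10) :=
        mul_le_mul_left ((σ.act [] St.s0).coe_le_one Ac.b) _
    _ = 7/10 := one_mul _

end Bounds2

section Main

variable (P : Strategy exM → St → Measure (Traj St Ac)) (hP : IsPathMeasure exM P)

include hP

lemma ub_reach (σ : Strategy exM) :
    P σ St.s0 (Reach ({St.s1} : Set St)) ≤ 4/5 := by
  classical
  set E2 : Set (Traj St Ac) := {ω | (ω 1).1 = St.s1 ∨ (ω 1).1 = St.u} with hE2def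
  set B0 : Set (Traj St Ac) := {ω | (ω 0).1 ≠ St.s0} with hB0def
  set D : ℕ → Set (Traj St Ac) := fun n => {ω |
    ¬ ((ω n).2 ∈ exM.avail (ω n).1 ∧ exM.trans (ω n).1 (ω n).2 (ω (n + 1)).1 ≠ 0)}
    with hDdef
  have hsub : Reach ({St.s1} : Set St) ⊆ E2 ∪ (B0 ∪ ⋃ n, D n) := by
    intro ω hω
    by_cases hB : ω ∈ B0
    · exact Or.inr (Or.inl hB)
    by_cases hD : ω ∈ ⋃ n, D n
    · exact Or.inr (Or.inr hD)
    left
    have h0 : (ω 0).1 = St.s0 := not_not.mp hB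
    have hc : ∀ n, (ω n).2 ∈ exM.avail (ω n).1 ∧
        exM.trans (ω n).1 (ω n).2 (ω (n + 1)).1 ≠ 0 := by
      intro n
      by_contra hcn
      exact hD (Set.mem_iUnion.mpr ⟨n, hcn⟩)
    rcases consist_cases ω h0 hc with hu | ⟨hstat, hcase⟩
    · exact Or.inr hu
    · obtain ⟨i, hi⟩ := hω
      have hi1 : (ω i).1 = St.s1 := hi
      match i with
      | 0 => rw [h0] at hi1; exact absurd hi1 (by simp)
      | (m + 1) =>
        rw [hstat m] at hi1
        exact Or.inl hi1
  have hB0 : P σ St.s0 B0 = 0 := meas_root P hP σ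
  have hD0 : P σ St.s0 (⋃ n, D n) = 0 := by
    refine le_antisymm (le_trans (measure_iUnion_le _) (le_of_eq ?_)) zero_le
    rw [ENNReal.tsum_eq_zero]
    intro n
    exact meas_bad P hP σ n
  calc P σ St.s0 (Reach ({St.s1} : Set St))
      ≤ P σ St.s0 (E2 ∪ (B0 ∪ ⋃ n, D n)) := measure_mono hsub
    _ ≤ P σ St.s0 E2 + P σ St.s0 (B0 ∪ ⋃ n, D n) := measure_union_le _ _
    _ ≤ P σ St.s0 E2 + (P σ St.s0 B0 + P σ St.s0 (⋃ n, D n)) :=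
        add_le_add le_rfl (measure_union_le _ _)
    _ = P σ St.s0 E2 := by rw [hB0, hD0]; simp
    _ ≤ 4/5 := meas_E2_le P hP σ

lemma ub_reachU (σ : Strategy exM) :
    P σ St.s0 (Reach (({St.s0, St.s1, St.s2, St.s3} : Set St)ᶜ)) ≤ 7/10 := by
  classical
  set E3 : Set (Traj St Ac) := {ω | (ω 1).1 = St.u} with hE3def
  set B0 : Set (Traj St Ac) := {ω | (ω 0).1 ≠ St.s0} with hB0def
  set D : ℕ → Set (Traj St Ac) := fun n => {ω |
    ¬ ((ω n).2 ∈ exM.avail (ω n).1 ∧ exM.trans (ω n).1 (ω n).2 (ω (n + 1)).1 ≠ 0)}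
    with hDdef
  have hsub : Reach (({St.s0, St.s1, St.s2, St.s3} : Set St)ᶜ) ⊆ E3 ∪ (B0 ∪ ⋃ n, D n) := by
    intro ω hω
    by_cases hB : ω ∈ B0
    · exact Or.inr (Or.inl hB)
    by_cases hD : ω ∈ ⋃ n, D n
    · exact Or.inr (Or.inr hD)
    left
    have h0 : (ω 0).1 = St.s0 := not_not.mp hB
    have hc : ∀ n, (ω n).2 ∈ exM.avail (ω n).1 ∧
        exM.trans (ω n).1 (ω n).2 (ω (n + 1)).1 ≠ 0 := by
      intro n
      by_contra hcn
      exact hD (Set.mem_iUnion.mpr ⟨n, hcn⟩)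
    rcases consist_cases ω h0 hc with hu | ⟨hstat, hcase⟩
    · exact hu
    · exfalso
      obtain ⟨i, hi⟩ := hω
      have hi1 : (ω i).1 ∉ ({St.s0, St.s1, St.s2, St.s3} : Set St) := hi
      apply hi1
      match i with
      | 0 => rw [h0]; simp
      | (m + 1) =>
        rw [hstat m]
        rcases hcase with h | h | h <;> rw [h] <;> simp
  have hB0 : P σ St.s0 B0 = 0 := meas_root P hP σ
  have hD0 : P σ St.s0 (⋃ n, D n) = 0 := by
    refine le_antisymm (le_trans (measure_iUnion_le _) (le_of_eq ?_)) zero_le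
    rw [ENNReal.tsum_eq_zero]
    intro n
    exact meas_bad P hP σ n
  calc P σ St.s0 (Reach (({St.s0, St.s1, St.s2, St.s3} : Set St)ᶜ))
      ≤ P σ St.s0 (E3 ∪ (B0 ∪ ⋃ n, D n)) := measure_mono hsub
    _ ≤ P σ St.s0 E3 + P σ St.s0 (B0 ∪ ⋃ n, D n) := measure_union_le _ _
    _ ≤ P σ St.s0 E3 + (P σ St.s0 B0 + P σ St.s0 (⋃ n, D n)) :=
        add_le_add le_rfl (measure_union_le _ _)
    _ = P σ St.s0 E3 := by rw [hB0, hD0]; simp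
    _ ≤ 7/10 := meas_E3_le P hP σ

lemma cylA_val : P sigA St.s0 (Cyl [(St.s0, Ac.a), (St.s1, Ac.loop)]) = 4/5 := by
  rw [hP.2, cylProb_pair, if_pos rfl, sigA_act, sigA_act, trans_s0_a_s1]
  simp [PMF.pure_apply]

lemma lb_a : 4/5 ≤ P sigA St.s0 (Reach ({St.s1} : Set St)) := by
  rw [← cylA_val P hP]
  refine measure_mono ?_
  intro ω hω
  refine ⟨1, ?_⟩
  have h1 := hω ⟨1, by norm_num⟩
  rw [show ((⟨1, by norm_num⟩ : Fin 2) : ℕ) = 1 from rfl] at h1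
  rw [h1]
  rfl

lemma lb_b : 7/10 ≤ P sigB St.s0 (Reach (({St.s0, St.s1, St.s2, St.s3} : Set St)ᶜ)) := by
  have hc : P sigB St.s0 (Cyl [(St.s0, Ac.b), (St.u, Ac.loop)]) = 7/10 := by
    rw [hP.2, cylProb_pair, if_pos rfl, sigB_act, sigB_act, trans_s0_b_u]
    simp [PMF.pure_apply]
  rw [← hc]
  refine measure_mono ?_
  intro ω hω
  refine ⟨1, ?_⟩
  have h1 := hω ⟨1, by norm_num⟩
  rw [show ((⟨1, by norm_num⟩ : Fin 2) : ℕ) = 1 from rfl] at h1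
  rw [h1]
  simp

lemma stay_compl_zero :
    P sigA St.s0 ((Stay ({St.s0, St.s1, St.s2, St.s3} : Set St))ᶜ) = 0 := by
  refine le_antisymm ?_ zero_le
  have hsub : (Stay ({St.s0, St.s1, St.s2, St.s3} : Set St))ᶜ ⊆
      ⋃ n, {ω : Traj St Ac | (ω n).1 = St.u} := by
    intro ω hω
    rw [Set.mem_compl_iff] at hω
    have : ∃ n, (ω n).1 ∉ ({St.s0, St.s1, St.s2, St.s3} : Set St) := by
      by_contra hcon
      push_neg at hcon
      exact hω hcon
    obtain ⟨n, hn⟩ := this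
    refine Set.mem_iUnion.mpr ⟨n, ?_⟩
    show (ω n).1 = St.u
    cases hU : (ω n).1 <;> rw [hU] at hn <;> first
      | exact hU
      | (exact absurd (by simp) hn)
  refine le_trans (measure_mono hsub) (le_trans (measure_iUnion_le _) (le_of_eq ?_))
  rw [ENNReal.tsum_eq_zero]
  intro n
  exact meas_leaveC_sigA P hP n

lemma lb_stay : 4/5 ≤ P sigA St.s0
    (Reach (({St.s1} : Set St) ∩ {St.s0, St.s1, St.s2, St.s3}) ∩
      Stay ({St.s0, St.s1, St.s2, St.s3} : Set St)) := by
  set C : Set St := {St.s0, St.s1, St.s2, St.s3} with hCdef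
  set Cy : Set (Traj St Ac) := Cyl [(St.s0, Ac.a), (St.s1, Ac.loop)] with hCydef
  have h1 : P sigA St.s0 Cy ≤ P sigA St.s0 (Cy ∩ Stay C) + P sigA St.s0 ((Stay C)ᶜ) := by
    refine le_trans (measure_mono ?_) (measure_union_le _ _)
    intro ω hω
    by_cases hS : ω ∈ Stay C
    · exact Or.inl ⟨hω, hS⟩
    · exact Or.inr hS
  rw [stay_compl_zero P hP, add_zero, cylA_val P hP] at h1
  refine le_trans h1 (measure_mono ?_)
  intro ω hω
  refine ⟨⟨1, ?_⟩, hω.2⟩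
  have h1' := hω.1 ⟨1, by norm_num⟩
  rw [show ((⟨1, by norm_num⟩ : Fin 2) : ℕ) = 1 from rfl] at h1'
  rw [h1']
  simp [hCdef]

lemma val1 : pmax exM P St.s0 (Reach ({St.s1} : Set St)) = 4/5 :=
  le_antisymm (iSup_le (ub_reach P hP)) (le_iSup_of_le sigA (lb_a P hP))

lemma val2 : pmax exM P St.s0
    (Reach (({St.s1} : Set St) ∩ {St.s0, St.s1, St.s2, St.s3}) ∩
      Stay ({St.s0, St.s1, St.s2, St.s3} : Set St)) = 4/5 := by
  refine le_antisymm (iSup_le fun σ => ?_) (le_iSup_of_le sigA (lb_stay P hP))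
  refine le_trans (measure_mono ?_) (ub_reach P hP σ)
  intro ω hω
  obtain ⟨⟨i, hi⟩, _⟩ := hω
  exact ⟨i, hi.1⟩

lemma val3 : pmax exM P St.s0
    (Reach (({St.s0, St.s1, St.s2, St.s3} : Set St)ᶜ)) = 7/10 :=
  le_antisymm (iSup_le (ub_reachU P hP)) (le_iSup_of_le sigB (lb_b P hP))

end Main

/-- For the MDP `exM`, with `C = {s₀, s₁, s₂, s₃}` and `R = {s₁}`:
`P^max[Reach R] = P^max[Reach (R ∩ C) ∩ Stay C] = 0.8` while `P^max[Reach (S \ C)] = 0.7`.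
In particular, for every `0 < ε ≤ 0.7` there are an MDP `M`, a set `C` containing the
initial state that is not an `ε`-core, and a set `R ⊆ C` such that the reachability value
`P^max[Reach R]` is computed exactly by restricting to `C`. -/
theorem core_not_always_required
    (P : Strategy exM → St → Measure (Traj St Ac)) (hP : IsPathMeasure exM P) :
    (pmax exM P exM.init (Reach ({St.s1} : Set St))).toReal = 0.8 ∧
    (pmax exM P exM.init
        (Reach (({St.s1} : Set St) ∩ {St.s0, St.s1, St.s2, St.s3}) ∩
          Stay ({St.s0, St.s1, St.s2, St.s3} : Set St))).toReal = 0.8 ∧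
    (pmax exM P exM.init (Reach (({St.s0, St.s1, St.s2, St.s3} : Set St)ᶜ))).toReal = 0.7 ∧
    ∀ ε : ℝ, 0 < ε → ε ≤ 0.7 →
      ∃ (M : MDP St Ac) (C R : Set St), M.init ∈ C ∧ R ⊆ C ∧
        ∀ P' : Strategy M → St → Measure (Traj St Ac), IsPathMeasure M P' →
          ¬ IsCore M P' ε C ∧
            pmax M P' M.init (Reach R) = pmax M P' M.init (Reach (R ∩ C) ∩ Stay C) := by
  have hinit : exM.init = St.s0 := rfl
  refine ⟨?_, ?_, ?_, ?_⟩
  · rw [hinit, val1 P hP, ENNReal.toReal_div]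
    norm_num
  · rw [hinit, val2 P hP, ENNReal.toReal_div]
    norm_num
  · rw [hinit, val3 P hP, ENNReal.toReal_div]
    norm_num
  · intro ε hε0 hε7
    refine ⟨exM, {St.s0, St.s1, St.s2, St.s3}, {St.s1}, by simp [hinit], by simp, ?_⟩
    intro P' hP'
    constructor
    · rw [IsCore, hinit, val3 P' hP', not_lt]
      calc ENNReal.ofReal ε ≤ ENNReal.ofReal 0.7 := ENNReal.ofReal_le_ofReal hε7
        _ = 7/10 := by
            rw [show (0.7:ℝ) = 7/10 by norm_num, ENNReal.ofReal_div_of_pos (by norm_num)]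
            norm_num
    · rw [hinit, val1 P' hP', val2 P' hP']
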